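/- Let κ be a finite measure and λ a probability measure on a σ-field 𝒢, and let 𝒢ₙ be an increasing sequence of sub-σ-fields whose union generates 𝒢. Suppose that for each n, the restriction of κ to 𝒢ₙ is absolutely continuous with respect to the restriction of λ to 𝒢ₙ, with Radon–Nikodým derivative Xₙ. Set X := limsup_{n→∞} Xₙ. Then κ is absolutely continuous with respect to λ if and only if X < ∞ κ-almost everywhere. -/

import Mathlib

open MeasureTheory Filter
open scoped ENNReal
open scoped Topology NNReal

/-- **Radon–Nikodým dichotomy, absolute continuity part.**
Let `κ` be a finite measure and `λ` a probability measure on a σ-field `m`,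
let `𝒢 n` be an increasing sequence of sub-σ-fields whose union generates `m`,
and let `X n` be a `𝒢 n`-measurable version of the Radon–Nikodým derivative of
`κ` restricted to `𝒢 n` with respect to `λ` restricted to `𝒢 n`.
Then `κ ≪ λ` iff `limsup X n < ∞` κ-a.e. -/
theorem rn_dichotomy_abs_continuous {Ω : Type*} {m : MeasurableSpace Ω}
    (κ lam : Measure Ω) [IsFiniteMeasure κ] [IsProbabilityMeasure lam]
    (𝒢 : ℕ → MeasurableSpace Ω) (hmono : Monotone 𝒢) (hle : ∀ n, 𝒢 n ≤ m)
    (hgen : (⨆ n, 𝒢 n) = m)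
    (X : ℕ → Ω → ℝ≥0∞) (hXmeas : ∀ n, Measurable[𝒢 n] (X n))
    (hXrn : ∀ n s, MeasurableSet[𝒢 n] s → κ s = ∫⁻ x in s, X n x ∂lam) :
    κ ≪ lam ↔ (∀ᵐ x ∂κ, limsup (fun n => X n x) atTop < ⊤) := by
  classical
  set ρ : Measure Ω := κ + lam with hρdef
  have hκρ : κ ≪ ρ := Measure.absolutelyContinuous_of_le (Measure.le_add_right le_rfl)
  let F : Filtration ℕ m := ⟨𝒢, hmono, hle⟩
  set Y : ℕ → Ω → ℝ≥0∞ := fun n ω => 1 - (X n ω + 1)⁻¹ with hYdef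
  set Z : ℕ → Ω → ℝ := fun n ω => (Y n ω).toReal with hZdef
  -- basic facts about Y
  have hY1 : ∀ n ω, Y n ω ≤ 1 := fun n ω => tsub_le_self
  have hYtop : ∀ n ω, Y n ω ≠ ∞ := fun n ω => (lt_of_le_of_lt (hY1 n ω) ENNReal.one_lt_top).ne
  have hYmeas : ∀ n, Measurable[𝒢 n] (Y n) := fun n =>
    measurable_const.sub (((hXmeas n).add measurable_const).inv)
  have hYmul : ∀ n ω, Y n ω * (X n ω + 1) = X n ω := by
    intro n ω
    rcases eq_or_ne (X n ω) ∞ with h | h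
    · simp [hYdef, h]
    · have h1 : (X n ω + 1) ≠ 0 := by simp
      have h2 : (X n ω + 1) ≠ ∞ := by simp [h]
      rw [hYdef]
      rw [ENNReal.sub_mul (fun _ _ => h2), one_mul, ENNReal.inv_mul_cancel h1 h2,
        ENNReal.add_sub_cancel_right ENNReal.one_ne_top]
  -- key lintegral computation
  have hYint : ∀ n s, MeasurableSet[𝒢 n] s → ∫⁻ ω in s, Y n ω ∂ρ = κ s := by
    intro n s hs
    have htrim : ρ.trim (hle n) = (lam.trim (hle n)).withDensity (fun ω => X n ω + 1) := by
      refine @Measure.ext Ω (𝒢 n) _ _ fun t ht => ?_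
      rw [trim_measurableSet_eq (hle n) ht, @withDensity_apply Ω (𝒢 n) _ _ t ht,
        restrict_trim (hle n) lam ht,
        lintegral_trim (hle n) (f := fun ω => X n ω + 1) (Measurable.add (hXmeas n) measurable_const)]
      rw [show ρ t = κ t + lam t from rfl, hXrn n t ht,
        lintegral_add_right _ measurable_const, lintegral_const,
        Measure.restrict_apply_univ, one_mul]
    calc ∫⁻ ω in s, Y n ω ∂ρ = ∫⁻ ω in s, Y n ω ∂(ρ.trim (hle n)) := by
          rw [restrict_trim (hle n) ρ hs, lintegral_trim (hle n) (hYmeas n)]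
      _ = ∫⁻ ω in s, Y n ω * (X n ω + 1) ∂(lam.trim (hle n)) := by
          rw [htrim, @restrict_withDensity Ω (𝒢 n) _ _ hs _,
            lintegral_withDensity_eq_lintegral_mul _ (f := fun ω => X n ω + 1) (Measurable.add (hXmeas n) measurable_const)
              (hYmeas n)]
          congr 1; funext ω; exact mul_comm _ _
      _ = ∫⁻ ω in s, X n ω ∂(lam.trim (hle n)) := by
          congr 1; funext ω; exact hYmul n ω
      _ = ∫⁻ ω in s, X n ω ∂lam := by
          rw [restrict_trim (hle n) lam hs, lintegral_trim (hle n) (hXmeas n)]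
      _ = κ s := (hXrn n s hs).symm
  -- measurability / integrability of Z
  have hZmeasm : ∀ n, Measurable (Z n) := fun n =>
    ENNReal.measurable_toReal.comp ((hYmeas n).mono (hle n) le_rfl)
  have hZ01 : ∀ n ω, 0 ≤ Z n ω ∧ Z n ω ≤ 1 := fun n ω =>
    ⟨ENNReal.toReal_nonneg, by
      simpa using (ENNReal.toReal_le_toReal (hYtop n ω) ENNReal.one_ne_top).mpr (hY1 n ω)⟩
  have hZint : ∀ n, Integrable (Z n) ρ := fun n =>
    (integrable_const (1 : ℝ)).mono' (hZmeasm n).aestronglyMeasurable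
      (Filter.Eventually.of_forall fun ω => by
        rw [Real.norm_eq_abs, abs_of_nonneg (hZ01 n ω).1]; exact (hZ01 n ω).2)
  have hZsi : ∀ n s, MeasurableSet[𝒢 n] s → ∫ ω in s, Z n ω ∂ρ = (κ s).toReal := by
    intro n s hs
    rw [hZdef]
    rw [integral_toReal ((hYmeas n).mono (hle n) le_rfl).aemeasurable
      (Filter.Eventually.of_forall fun ω => (hY1 n ω).trans_lt ENNReal.one_lt_top),
      hYint n s hs]
  -- martingale property
  have hadp : StronglyAdapted F Z := fun n =>
    (ENNReal.measurable_toReal.comp (hYmeas n)).stronglyMeasurable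
  have hmart : Martingale Z F ρ :=
    martingale_of_setIntegral_eq_succ hadp hZint fun i s hs => by
      rw [hZsi i s hs, hZsi (i + 1) s (hmono (Nat.le_succ i) s hs)]
  have hunif : UniformIntegrable Z 1 ρ := by
    refine uniformIntegrable_of le_rfl ENNReal.one_ne_top
      (fun n => (hZmeasm n).aestronglyMeasurable) fun ε hε => ⟨2, fun n => ?_⟩
    have hempty : {x : Ω | (2 : ℝ≥0) ≤ ‖Z n x‖₊} = ∅ := by
      ext x
      simp only [Set.mem_setOf_eq, Set.mem_empty_iff_false, iff_false, not_le]
      have hx : ‖Z n x‖ < 2 := by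
        rw [Real.norm_eq_abs, abs_of_nonneg (hZ01 n x).1]
        exact lt_of_le_of_lt (hZ01 n x).2 one_lt_two
      exact_mod_cast hx
    rw [hempty, Set.indicator_empty]
    simp only [eLpNorm_zero']
    simp
  -- the limit process
  set g : Ω → ℝ := F.limitProcess Z ρ with hgdef
  have hgtends : ∀ᵐ ω ∂ρ, Tendsto (fun n => Z n ω) atTop (𝓝 (g ω)) :=
    hmart.submartingale.ae_tendsto_limitProcess_of_uniformIntegrable hunif
  have hgsm : StronglyMeasurable[m] g := Filtration.stronglyMeasurable_limit_process'
  have hgmeas : Measurable g := hgsm.measurable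
  obtain ⟨R, hR⟩ := hunif.2.2
  have hgint : Integrable g ρ :=
    (Filtration.memLp_limitProcess_of_eLpNorm_bdd hunif.1 hR).integrable le_rfl
  have hcond := hmart.ae_eq_condExp_limitProcess hunif
  have hgsi : ∀ n s, MeasurableSet[𝒢 n] s → ∫ ω in s, g ω ∂ρ = (κ s).toReal := by
    intro n s hs
    rw [← setIntegral_condExp (hle n) hgint hs, ← hZsi n s hs]
    refine (setIntegral_congr_ae (hle n s hs) ?_).symm
    filter_upwards [hcond n] with ω hω _ using hω
  have hg01 : ∀ᵐ ω ∂ρ, 0 ≤ g ω ∧ g ω ≤ 1 := by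
    filter_upwards [hgtends] with ω hω
    exact ⟨ge_of_tendsto hω (Filter.Eventually.of_forall fun n => (hZ01 n ω).1),
      le_of_tendsto hω (Filter.Eventually.of_forall fun n => (hZ01 n ω).2)⟩
  -- the density of κ with respect to ρ
  set g' : Ω → ℝ≥0∞ := fun ω => ENNReal.ofReal (g ω) with hg'def
  have hg'meas : Measurable g' := ENNReal.measurable_ofReal.comp hgmeas
  have hg'le1 : ∀ᵐ ω ∂ρ, g' ω ≤ 1 := by
    filter_upwards [hg01] with ω h
    simpa [hg'def] using ENNReal.ofReal_le_ofReal h.2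
  have hfin : ∀ s : Set Ω, MeasurableSet s → ∫⁻ ω in s, g' ω ∂ρ ≠ ∞ := by
    intro s hs
    refine ne_of_lt (lt_of_le_of_lt (lintegral_mono_ae (ae_restrict_of_ae hg'le1)) ?_)
    rw [lintegral_const, one_mul]
    exact measure_lt_top _ _
  have key : ∀ n s, MeasurableSet[𝒢 n] s → κ s = (ρ.withDensity g') s := by
    intro n s hs
    have hsm : MeasurableSet s := hle n s hs
    rw [withDensity_apply _ hsm]
    have h1 : ∫ ω in s, g ω ∂ρ = (∫⁻ ω in s, g' ω ∂ρ).toReal := by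
      rw [integral_eq_lintegral_of_nonneg_ae (ae_restrict_of_ae (hg01.mono fun ω h => h.1))
        hgmeas.aestronglyMeasurable.restrict]
    exact (ENNReal.toReal_eq_toReal_iff' (measure_ne_top κ s) (hfin s hsm)).mp
      ((hgsi n s hs).symm.trans h1)
  have hκeq : κ = ρ.withDensity g' := by
    refine ext_of_generate_finite {s | ∃ n, MeasurableSet[𝒢 n] s} ?_ ?_ ?_
      (key 0 Set.univ MeasurableSet.univ)
    · rw [← hgen, MeasurableSpace.measurableSpace_iSup_eq]
    · rintro s ⟨i, hs⟩ t ⟨j, ht⟩ -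
      rcases le_total i j with h | h
      exacts [⟨j, (hmono h s hs).inter ht⟩, ⟨i, hs.inter (hmono h t ht)⟩]
    · rintro s ⟨n, hs⟩
      exact key n s hs
  -- the a.e. equivalence between `limsup X < ∞` and `g < 1`
  have hiff : ∀ᵐ ω ∂ρ, (limsup (fun n => X n ω) atTop < ⊤ ↔ g ω < 1) := by
    filter_upwards [hgtends, hg01] with ω hω h01
    have hYeq : ∀ n, Y n ω = ENNReal.ofReal (Z n ω) := fun n =>
      (ENNReal.ofReal_toReal (hYtop n ω)).symm
    constructor
    · intro hlim
      by_contra hge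
      have hg1 : g ω = 1 := le_antisymm h01.2 (not_lt.mp hge)
      have hY : Tendsto (fun n => Y n ω) atTop (𝓝 1) := by
        have h := ENNReal.tendsto_ofReal hω
        rw [hg1, ENNReal.ofReal_one] at h
        exact h.congr fun n => (hYeq n).symm
      have hinv : Tendsto (fun n => (X n ω + 1)⁻¹) atTop (𝓝 0) := by
        have hsub : ∀ n : ℕ, (X n ω + 1)⁻¹ = 1 - Y n ω := fun n =>
          (ENNReal.sub_sub_cancel ENNReal.one_ne_top
            (ENNReal.inv_le_one.mpr le_add_self)).symm
        have h := ENNReal.Tendsto.sub (tendsto_const_nhds (x := (1 : ℝ≥0∞))) hY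
          (Or.inl ENNReal.one_ne_top)
        rw [tsub_self] at h
        exact h.congr fun n => (hsub n).symm
      set L := limsup (fun n => X n ω) atTop with hL
      have hev1 : ∀ᶠ n in atTop, X n ω < L + 1 :=
        eventually_lt_of_limsup_lt (ENNReal.lt_add_right hlim.ne one_ne_zero)
      have hpos : (0 : ℝ≥0∞) < (L + 2)⁻¹ :=
        ENNReal.inv_pos.mpr (ENNReal.add_ne_top.mpr ⟨hlim.ne, ENNReal.ofNat_ne_top⟩)
      have hev2 : ∀ᶠ n in atTop, (X n ω + 1)⁻¹ < (L + 2)⁻¹ := hinv.eventually_lt_const hpos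
      rcases (hev1.and hev2).exists with ⟨n, hn1, hn2⟩
      have h2 : L + 2 < X n ω + 1 := ENNReal.inv_lt_inv.mp hn2
      have h3 : X n ω + 1 < L + 2 := by
        calc X n ω + 1 < (L + 1) + 1 := ENNReal.add_lt_add_right ENNReal.one_ne_top hn1
          _ = L + 2 := by rw [add_assoc]; norm_num
      exact absurd h2 (not_lt.mpr h3.le)
    · intro hg1
      set c : ℝ := (1 + g ω) / 2 with hc
      have hgc : g ω < c := by rw [hc]; linarith
      have hc1 : c < 1 := by rw [hc]; linarith
      have hev : ∀ᶠ n in atTop, Z n ω < c := hω.eventually_lt_const hgc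
      have hbd : ∀ᶠ n in atTop, X n ω ≤ (1 - ENNReal.ofReal c)⁻¹ := by
        filter_upwards [hev] with n hn
        have h1 : Y n ω ≤ ENNReal.ofReal c := by
          rw [hYeq n]; exact ENNReal.ofReal_le_ofReal hn.le
        have h1' : 1 - (X n ω + 1)⁻¹ ≤ ENNReal.ofReal c := h1
        have h2 : 1 - ENNReal.ofReal c ≤ (X n ω + 1)⁻¹ :=
          tsub_le_iff_right.mpr (by rw [add_comm]; exact tsub_le_iff_right.mp h1')
        calc X n ω ≤ X n ω + 1 := le_self_add
          _ = ((X n ω + 1)⁻¹)⁻¹ := (inv_inv _).symm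
          _ ≤ (1 - ENNReal.ofReal c)⁻¹ := ENNReal.inv_le_inv.mpr h2
      have hle' : limsup (fun n => X n ω) atTop ≤ (1 - ENNReal.ofReal c)⁻¹ :=
        limsup_le_of_le (by isBoundedDefault) hbd
      refine lt_of_le_of_lt hle' ?_
      rw [ENNReal.inv_lt_top]
      exact tsub_pos_iff_lt.mpr (ENNReal.ofReal_lt_one.mpr hc1)
  -- transfer the a.e. equivalence to κ
  have hiffκ : ∀ᵐ ω ∂κ, (limsup (fun n => X n ω) atTop < ⊤ ↔ g ω < 1) :=
    hiff.filter_mono hκρ.ae_le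
  set B : Set Ω := {ω | 1 ≤ g ω} with hBdef
  have hB : MeasurableSet B := measurableSet_le measurable_const hgmeas
  constructor
  · intro habs
    have hκB : κ B = ρ B := by
      rw [hκeq, withDensity_apply _ hB]
      have hae : ∀ᵐ ω ∂ρ.restrict B, g' ω = 1 := by
        rw [ae_restrict_iff' hB]
        filter_upwards [hg'le1] with ω h1 hω
        exact le_antisymm h1 (by simpa [hg'def] using ENNReal.one_le_ofReal.mpr hω)
      rw [lintegral_congr_ae hae, lintegral_one, Measure.restrict_apply_univ]
    have hlamB : lam B = 0 := by
      have h1 : κ B + 0 = κ B + lam B := by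
        rw [add_zero, ← show ρ B = κ B + lam B from rfl, ← hκB]
      exact ((ENNReal.add_right_inj (measure_ne_top κ B)).mp h1).symm
    have hκB0 : κ B = 0 := habs hlamB
    have hnB : ∀ᵐ ω ∂κ, ω ∈ Bᶜ := compl_mem_ae_iff.mpr hκB0
    filter_upwards [hiffκ, hnB] with ω hω h1
    exact hω.mpr (not_le.mp h1)
  · intro hX
    have hκB0 : κ B = 0 := by
      refine compl_mem_ae_iff.mp ?_
      filter_upwards [hiffκ, hX] with ω hω h1
      exact not_le.mpr (hω.mp h1)
    refine Measure.AbsolutelyContinuous.mk fun s hs hlams => ?_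
    have h2 : ∫⁻ ω in s, g' ω ∂ρ = ρ s := by
      rw [← withDensity_apply _ hs, ← hκeq, show ρ s = κ s + lam s from rfl, hlams, add_zero]
    have h3 : ∫⁻ ω in s, (1 - g' ω) ∂ρ = 0 := by
      rw [lintegral_sub hg'meas (hfin s hs) (ae_restrict_of_ae hg'le1), h2,
        setLIntegral_one, tsub_self]
    have h4 : ∀ᵐ ω ∂ρ, ω ∈ s → 1 ≤ g' ω := by
      have h5 := (lintegral_eq_zero_iff (measurable_const.sub hg'meas)).mp h3
      rw [Filter.EventuallyEq, ae_restrict_iff' hs] at h5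
      filter_upwards [h5] with ω hω hmem
      exact tsub_eq_zero_iff_le.mp (hω hmem)
    have h5 : ρ (s \ B) = 0 := by
      refine measure_mono_null (fun ω hω => ?_) (ae_iff.mp h4)
      rcases hω with ⟨hωs, hωB⟩
      simp only [Set.mem_setOf_eq, Classical.not_imp]
      exact ⟨hωs, fun h => hωB (ENNReal.one_le_ofReal.mp h)⟩
    have h6 : κ s ≤ 0 := by
      calc κ s = κ ((s ∩ B) ∪ (s \ B)) := by rw [Set.inter_union_diff]
        _ ≤ κ (s ∩ B) + κ (s \ B) := measure_union_le _ _
        _ ≤ 0 + 0 :=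
            add_le_add (le_trans (measure_mono Set.inter_subset_right) hκB0.le) (hκρ h5).le
        _ = 0 := by rw [add_zero]
    exact le_antisymm h6 zero_le
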